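/- arXiv:0809.2626 — 4 statements merged into one kernel-verified Lean document; each statement's English description precedes it below -/
import Mathlib

section
/- Let F be a directed k-uniform hypergraph with edge set of size |F|, let G be a directed k-uniform hypergraph on a finite vertex set V, and let S ⊆ V^k be a set with t(F, G∖S) = 0. Then there exists a set S' ⊆ V^k that is invariant under the coordinatewise action of Aut(G) on V^k, satisfies |S'| ≤ |F|·|S|, and satisfies t(F, G∖S') = 0. -/
/-- A map `f : VF → V` is a homomorphism from the directed `k`-uniform hypergraph
`F` (a set of `k`-tuples of vertices of `VF`) to `G` if it maps every edge of `F`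
to an edge of `G`. -/
def IsHGHom {k : ℕ} {VF V : Type*} (F : Set (Fin k → VF)) (G : Set (Fin k → V))
    (f : VF → V) : Prop :=
  ∀ e ∈ F, (f ∘ e) ∈ G

/-- The homomorphism density `t(F,G)`: the probability that a uniformly random map
`VF → V` is a homomorphism from `F` to `G`. -/
noncomputable def homDensity {k : ℕ} {VF V : Type*} [Fintype VF] [Fintype V]
    (F : Set (Fin k → VF)) (G : Set (Fin k → V)) : ℝ :=
  (Set.ncard {f : VF → V | IsHGHom F G f} : ℝ) /
    ((Fintype.card V : ℝ) ^ (Fintype.card VF))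

/-- An automorphism of a directed `k`-uniform hypergraph `G` on vertex set `V`:
a bijective map `V → V` which is a homomorphism from `G` to itself. -/
def IsAuto {k : ℕ} {V : Type*} (G : Set (Fin k → V)) (π : V → V) : Prop :=
  Function.Bijective π ∧ ∀ e ∈ G, (π ∘ e) ∈ G

lemma homDensity_eq_zero_iff {k : ℕ} {VF V : Type*} [Fintype VF] [Fintype V]
    (F : Set (Fin k → VF)) (G : Set (Fin k → V)) :
    homDensity F G = 0 ↔ ∀ f : VF → V, ¬ IsHGHom F G f := by
  constructor
  · intro h f hf
    unfold homDensity at h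
    rcases div_eq_zero_iff.mp h with h1 | h2
    · have h1' : {g : VF → V | IsHGHom F G g}.ncard = 0 := by exact_mod_cast h1
      have hfin : {g : VF → V | IsHGHom F G g}.Finite := Set.toFinite _
      have hemp := (Set.ncard_eq_zero hfin).mp h1'
      have : f ∈ {g : VF → V | IsHGHom F G g} := hf
      rw [hemp] at this
      exact this
    · have h2' : (Fintype.card V : ℝ) = 0 ∧ Fintype.card VF ≠ 0 := pow_eq_zero_iff'.mp h2
      have hV : Fintype.card V = 0 := by exact_mod_cast h2'.1
      have hVF : 0 < Fintype.card VF := Nat.pos_of_ne_zero h2'.2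
      have : Nonempty VF := Fintype.card_pos_iff.mp hVF
      obtain ⟨a⟩ := this
      have : IsEmpty V := Fintype.card_eq_zero_iff.mp hV
      exact this.false (f a)
  · intro h
    unfold homDensity
    have : {g : VF → V | IsHGHom F G g} = ∅ := by
      ext g; simp [h g]
    rw [this]
    simp

/-- inverse of an automorphism is an automorphism -/
lemma isAuto_inv {k : ℕ} {V : Type*} [Fintype V] (G : Set (Fin k → V)) {π : V → V}
    (h : IsAuto G π) :
    ∃ σ : V → V, IsAuto G σ ∧ (∀ v, σ (π v) = v) ∧ (∀ v, π (σ v) = v) := by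
  classical
  let e := Equiv.ofBijective π h.1
  refine ⟨e.symm, ⟨e.symm.bijective, ?_⟩, fun v => e.symm_apply_apply v,
    fun v => e.apply_symm_apply v⟩
  intro x hx
  set GT := (Set.toFinite G).toFinset with hGT
  have hmem : ∀ a ∈ GT, π ∘ a ∈ GT := by
    intro a ha
    exact (Set.toFinite G).mem_toFinset.mpr (h.2 a ((Set.toFinite G).mem_toFinset.mp ha))
  have hinj : ∀ a₁ ∈ GT, ∀ a₂ ∈ GT, π ∘ a₁ = π ∘ a₂ → a₁ = a₂ := by
    intro a₁ _ a₂ _ hcomp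
    funext i
    exact h.1.1 (congrFun hcomp i)
  have hsurj := Finset.surj_on_of_inj_on_of_card_le (fun a _ => π ∘ a)
    (fun a ha => hmem a ha) (fun a₁ a₂ ha₁ ha₂ => hinj a₁ ha₁ a₂ ha₂) le_rfl
  obtain ⟨y, hy, hxy⟩ := hsurj x ((Set.toFinite G).mem_toFinset.mpr hx)
  have : (⇑e.symm) ∘ x = y := by
    funext i
    rw [hxy]
    exact e.symm_apply_apply (y i)
  rw [this]
  exact (Set.toFinite G).mem_toFinset.mp hy

/-- composition of automorphisms -/
lemma isAuto_comp {k : ℕ} {V : Type*} (G : Set (Fin k → V)) {π σ : V → V}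
    (hπ : IsAuto G π) (hσ : IsAuto G σ) : IsAuto G (π ∘ σ) :=
  ⟨hπ.1.comp hσ.1, fun x hx => by
    have : π ∘ (σ ∘ x) ∈ G := hπ.2 _ (hσ.2 x hx)
    simpa [Function.comp_assoc] using this⟩

/-- If `S ⊆ V^k` satisfies `t(F, G \ S) = 0`, then there is an `Aut(G)`-invariant
set `S' ⊆ V^k` (for the coordinatewise action of `Aut(G)` on `V^k`) with
`|S'| ≤ |F| * |S|` and `t(F, G \ S') = 0`. -/
theorem invariant_blocking_set (k : ℕ) (VF V : Type) [Fintype VF] [Fintype V]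
    (F : Set (Fin k → VF)) (hF : ∀ e ∈ F, Function.Injective e)
    (G : Set (Fin k → V)) (hG : ∀ e ∈ G, Function.Injective e)
    (S : Set (Fin k → V))
    (hS : homDensity F (G \ S) = 0) :
    ∃ S' : Set (Fin k → V),
      (∀ π : V → V, IsAuto G π → ∀ x ∈ S', (π ∘ x) ∈ S') ∧
      (S'.ncard : ℝ) ≤ (F.ncard : ℝ) * (S.ncard : ℝ) ∧
      homDensity F (G \ S') = 0 := by
  classical
  have hnohom : ∀ f : VF → V, ¬ IsHGHom F (G \ S) f := (homDensity_eq_zero_iff _ _).mp hS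
  set A : Finset (V → V) := Finset.univ.filter (fun π => IsAuto G π) with hA
  have hmemA : ∀ π, π ∈ A ↔ IsAuto G π := by
    intro π; simp [hA]
  have hidA : (id : V → V) ∈ A :=
    (hmemA _).mpr ⟨Function.bijective_id, fun x hx => by simpa using hx⟩
  have hApos : 0 < A.card := Finset.card_pos.mpr ⟨id, hidA⟩
  set T : Finset (Fin k → VF) := (Set.toFinite F).toFinset with hT
  set n : (Fin k → V) → ℕ := fun x => (A.filter (fun π => π ∘ x ∈ S)).card with hn
  set S' : Set (Fin k → V) := {x | A.card ≤ T.card * n x} with hS'def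
  have hninv : ∀ (σ : V → V), IsAuto G σ → ∀ x, n (σ ∘ x) = n x := by
    intro σ hσ x
    obtain ⟨σ', hσ', hl, hr⟩ := isAuto_inv G hσ
    apply Finset.card_bij (fun π _ => π ∘ σ)
    · intro π hπ
      simp only [Finset.mem_filter] at hπ ⊢
      refine ⟨(hmemA _).mpr (isAuto_comp G ((hmemA _).mp hπ.1) hσ), ?_⟩
      simpa [Function.comp_assoc] using hπ.2
    · intro π₁ _ π₂ _ heq
      funext v
      have h2 := congrFun heq (σ' v)
      simp only [Function.comp_apply, hr v] at h2
      exact h2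
    · intro ρ hρ
      simp only [Finset.mem_filter] at hρ
      refine ⟨ρ ∘ σ', ?_, ?_⟩
      · simp only [Finset.mem_filter]
        refine ⟨(hmemA _).mpr (isAuto_comp G ((hmemA _).mp hρ.1) hσ'), ?_⟩
        have : (ρ ∘ σ') ∘ (σ ∘ x) = ρ ∘ x := by
          funext i; simp only [Function.comp_apply, hl (x i)]
        rw [this]; exact hρ.2
      · funext v; simp only [Function.comp_apply, hl v]
  refine ⟨S', ?_, ?_, ?_⟩
  · intro π hπ x hx
    simp only [hS'def, Set.mem_setOf_eq] at hx ⊢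
    rw [hninv π hπ x]
    exact hx
  · -- cardinality bound
    set Sf : Finset (Fin k → V) := (Set.toFinite S).toFinset with hSf
    set S'f : Finset (Fin k → V) := (Set.toFinite S').toFinset with hS'f
    have hcount : ∀ π ∈ A,
        (Finset.univ.filter (fun x : Fin k → V => π ∘ x ∈ S)).card = Sf.card := by
      intro π hπ
      have hπ' := (hmemA _).mp hπ
      obtain ⟨σ', hσ', hl, hr⟩ := isAuto_inv G hπ'
      apply Finset.card_bij (fun x _ => π ∘ x)
      · intro x hx
        simp only [Finset.mem_filter] at hx
        exact (Set.toFinite S).mem_toFinset.mpr hx.2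
      · intro x₁ _ x₂ _ heq
        funext i
        exact hπ'.1.1 (congrFun heq i)
      · intro s hs
        refine ⟨σ' ∘ s, Finset.mem_filter.mpr ⟨Finset.mem_univ _, ?_⟩, ?_⟩
        · have : π ∘ (σ' ∘ s) = s := by
            funext i; simp only [Function.comp_apply, hr (s i)]
          rw [this]
          exact (Set.toFinite S).mem_toFinset.mp hs
        · funext i; simp only [Function.comp_apply, hr (s i)]
    have htotal : ∑ x : Fin k → V, n x = A.card * Sf.card := by
      have h1 : ∑ x : Fin k → V, n x
          = ∑ x : Fin k → V, ∑ π ∈ A, if π ∘ x ∈ S then 1 else 0 :=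
        Finset.sum_congr rfl (fun x _ => Finset.card_filter _ _)
      have h2 : ∀ π ∈ A, (∑ x : Fin k → V, if π ∘ x ∈ S then 1 else 0) = Sf.card := by
        intro π hπ
        rw [← Finset.card_filter]
        exact hcount π hπ
      rw [h1, Finset.sum_comm, Finset.sum_congr rfl h2, Finset.sum_const, smul_eq_mul]
    -- now the bound in ℕ
    have hbound : S'f.card * A.card ≤ T.card * Sf.card * A.card := by
      calc S'f.card * A.card = ∑ _x ∈ S'f, A.card := by
            rw [Finset.sum_const, smul_eq_mul]
        _ ≤ ∑ x ∈ S'f, T.card * n x := by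
            apply Finset.sum_le_sum
            intro x hx
            exact (Set.toFinite S').mem_toFinset.mp hx
        _ = T.card * ∑ x ∈ S'f, n x := by rw [Finset.mul_sum]
        _ ≤ T.card * ∑ x : Fin k → V, n x := by
            apply Nat.mul_le_mul_left
            exact Finset.sum_le_sum_of_subset (Finset.subset_univ _)
        _ = T.card * (A.card * Sf.card) := by rw [htotal]
        _ = T.card * Sf.card * A.card := by ring
    have hnat : S'f.card ≤ T.card * Sf.card := Nat.le_of_mul_le_mul_right hbound hApos
    have e1 : S'.ncard = S'f.card := Set.ncard_eq_toFinset_card S' (Set.toFinite S')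
    have e2 : S.ncard = Sf.card := Set.ncard_eq_toFinset_card S (Set.toFinite S)
    have e3 : F.ncard = T.card := Set.ncard_eq_toFinset_card F (Set.toFinite F)
    rw [e1, e2, e3]
    exact_mod_cast Nat.cast_le.mpr hnat
  · -- density zero
    rw [homDensity_eq_zero_iff]
    intro f hf
    -- every π ∈ A lies in some B e
    have hcover : ∀ π ∈ A, ∃ e ∈ T, π ∘ (f ∘ e) ∈ S := by
      intro π hπ
      have hπ' := (hmemA _).mp hπ
      have : ¬ IsHGHom F (G \ S) (π ∘ f) := hnohom _
      unfold IsHGHom at this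
      push_neg at this
      obtain ⟨e, he, hne⟩ := this
      refine ⟨e, (Set.toFinite F).mem_toFinset.mpr he, ?_⟩
      have hfe : f ∘ e ∈ G \ S' := hf e he
      have hG1 : π ∘ (f ∘ e) ∈ G := hπ'.2 _ hfe.1
      have : (π ∘ f) ∘ e = π ∘ (f ∘ e) := by funext i; rfl
      rw [this] at hne
      by_contra hns
      exact hne ⟨hG1, hns⟩
    have hTne : T.Nonempty := by
      obtain ⟨e, he, _⟩ := hcover id hidA
      exact ⟨e, he⟩
    have hsub : A ⊆ T.biUnion (fun e => A.filter (fun π => π ∘ (f ∘ e) ∈ S)) := by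
      intro π hπ
      obtain ⟨e, he, hs⟩ := hcover π hπ
      exact Finset.mem_biUnion.mpr ⟨e, he, Finset.mem_filter.mpr ⟨hπ, hs⟩⟩
    have hcardle : A.card ≤ ∑ e ∈ T, n (f ∘ e) := by
      calc A.card ≤ (T.biUnion (fun e => A.filter (fun π => π ∘ (f ∘ e) ∈ S))).card :=
            Finset.card_le_card hsub
        _ ≤ ∑ e ∈ T, (A.filter (fun π => π ∘ (f ∘ e) ∈ S)).card := Finset.card_biUnion_le
        _ = ∑ e ∈ T, n (f ∘ e) := rfl
    have hsum : ∑ e ∈ T, A.card ≤ ∑ e ∈ T, T.card * n (f ∘ e) := by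
      rw [Finset.sum_const, smul_eq_mul, ← Finset.mul_sum]
      exact Nat.mul_le_mul_left _ hcardle
    obtain ⟨e, he, hle⟩ := Finset.exists_le_of_sum_le hTne hsum
    have hmemS' : f ∘ e ∈ S' := hle
    have hfe : f ∘ e ∈ G \ S' := hf e ((Set.toFinite F).mem_toFinset.mp he)
    exact hfe.2 hmemS'
end

section
/- For every ε > 0 there exists δ > 0 such that for every finite group T and every subset S ⊆ T: if the number of triples (a,b,c) ∈ S × S × S with ab = c is at most δ·|T|², then there exists a subset R ⊆ S with |R| ≤ ε·|T| such that the set S∖R contains no triple (a,b,c) with ab = c. -/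
set_option maxHeartbeats 1000000

open Finset SimpleGraph Sum3 SimpleGraph.TripartiteFromTriangles

section aux
variable {T : Type} [Group T] [Fintype T] [DecidableEq T] (S : Set T) [DecidablePred (· ∈ S)]

/-- The set of triangle indices of the Cayley tripartite graph. -/
def triIdx : Finset (T × T × T) :=
  Finset.univ.filter fun p => p.1⁻¹ * p.2.1 ∈ S ∧ p.2.1⁻¹ * p.2.2 ∈ S ∧ p.1⁻¹ * p.2.2 ∈ S

lemma mem_triIdx {p : T × T × T} :
    p ∈ triIdx S ↔ p.1⁻¹ * p.2.1 ∈ S ∧ p.2.1⁻¹ * p.2.2 ∈ S ∧ p.1⁻¹ * p.2.2 ∈ S := by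
  simp [triIdx]

lemma clique_subset :
    (graph (triIdx S)).cliqueFinset 3 ⊆ (triIdx S).image toTriangle := by
  intro s hs
  rw [mem_cliqueFinset_iff, is3Clique_iff] at hs
  obtain ⟨x, y, z, hxy, hxz, hyz, rfl⟩ := hs
  obtain ⟨a, b, c, habc, hab, hac, hbc⟩ := graph_triple hxy hxz hyz
  rw [Graph.in₀₁_iff] at hab
  rw [Graph.in₀₂_iff] at hac
  rw [Graph.in₁₂_iff] at hbc
  obtain ⟨c', hc'⟩ := hab
  obtain ⟨b', hb'⟩ := hac
  obtain ⟨a', ha'⟩ := hbc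
  refine Finset.mem_image.2 ⟨(a, b, c), ?_, habc⟩
  rw [mem_triIdx] at hc' hb' ha' ⊢
  exact ⟨hc'.1, ha'.2.1, hb'.2.2⟩

/-- The set of solutions. -/
def solIdx : Finset (T × T × T) :=
  Finset.univ.filter fun p => p.1 ∈ S ∧ p.2.1 ∈ S ∧ p.2.2 ∈ S ∧ p.1 * p.2.1 = p.2.2

lemma triIdx_card_le : (triIdx S).card ≤ Fintype.card T * (solIdx S).card := by
  have h : (triIdx S).card ≤ ((Finset.univ : Finset T) ×ˢ solIdx S).card := by
    apply Finset.card_le_card_of_injOn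
      (fun p => (p.1, (p.1⁻¹ * p.2.1, p.2.1⁻¹ * p.2.2, p.1⁻¹ * p.2.2)))
    · intro p hp
      rw [Finset.mem_coe, mem_triIdx] at hp; rw [Finset.mem_coe]
      refine Finset.mem_product.2 ⟨Finset.mem_univ _, ?_⟩
      simp only [solIdx, Finset.mem_filter, Finset.mem_univ, true_and]
      exact ⟨hp.1, hp.2.1, hp.2.2, by group⟩
    · intro p _ q _ h
      simp only [Prod.mk.injEq] at h
      obtain ⟨h1, h2, h3, h4⟩ := h
      have e2 : p.2.1 = q.2.1 := by
        have := h2; rw [h1] at this; exact mul_left_cancel this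
      have e3 : p.2.2 = q.2.2 := by
        have := h4; rw [h1] at this; exact mul_left_cancel this
      exact Prod.ext h1 (Prod.ext e2 e3)
  simpa [Finset.card_product] using h

end aux

/-- **Removal lemma for the equation `ab = c` in groups** (Green; Kráľ–Serra–Vena).
For every `ε > 0` there is `δ > 0` such that for every finite group `T` and
every `S ⊆ T`: if the number of triples `(a,b,c) ∈ S × S × S` with `a * b = c`
is at most `δ * |T|²`, then one can remove a set `R ⊆ S` of at most `ε * |T|`
elements so that `S \ R` contains no triple `(a,b,c)` with `a * b = c`. -/
theorem group_equation_removal (ε : ℝ) (hε : 0 < ε) :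
    ∃ δ : ℝ, 0 < δ ∧
      ∀ (T : Type) [Group T] [Fintype T] (S : Set T),
        (Nat.card {p : T × T × T //
            p.1 ∈ S ∧ p.2.1 ∈ S ∧ p.2.2 ∈ S ∧ p.1 * p.2.1 = p.2.2} : ℝ)
          ≤ δ * (Fintype.card T : ℝ) ^ 2 →
        ∃ R ⊆ S, (R.ncard : ℝ) ≤ ε * (Fintype.card T : ℝ) ∧
          ∀ a ∈ S \ R, ∀ b ∈ S \ R, ∀ c ∈ S \ R, a * b ≠ c := by
  classical
  set η : ℝ := min (ε / 81) 1 with hη_def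
  have hη0 : 0 < η := lt_min (by positivity) one_pos
  have hη1 : η ≤ 1 := min_le_right _ _
  have hηε : η ≤ ε / 81 := min_le_left _ _
  refine ⟨triangleRemovalBound η, triangleRemovalBound_pos hη0, ?_⟩
  intro T _ _ S hS
  set n : ℕ := Fintype.card T with hn_def
  have hn0 : 0 < n := Fintype.card_pos
  -- the solution count
  have hsol : (Nat.card {p : T × T × T //
      p.1 ∈ S ∧ p.2.1 ∈ S ∧ p.2.2 ∈ S ∧ p.1 * p.2.1 = p.2.2}) = (solIdx S).card := by
    rw [Nat.card_eq_fintype_card, solIdx]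
    convert Fintype.card_subtype _
  rw [hsol] at hS
  -- the tripartite graph
  set t : Finset (T × T × T) := triIdx S with ht_def
  set G : SimpleGraph (T ⊕ T ⊕ T) := graph t with hG_def
  have hV : (Fintype.card (T ⊕ T ⊕ T)) = 3 * n := by
    simp [Fintype.card_sum]; ring
  -- few triangles
  have hclique : ((G.cliqueFinset 3).card : ℝ) <
      triangleRemovalBound η * (Fintype.card (T ⊕ T ⊕ T)) ^ 3 := by
    have h1 : (G.cliqueFinset 3).card ≤ n * (solIdx S).card := by
      calc (G.cliqueFinset 3).card ≤ (t.image toTriangle).card := by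
              exact Finset.card_le_card (clique_subset S)
        _ ≤ t.card := Finset.card_image_le
        _ ≤ n * (solIdx S).card := triIdx_card_le S
    calc ((G.cliqueFinset 3).card : ℝ) ≤ (n : ℝ) * (solIdx S).card := by exact_mod_cast h1
      _ ≤ (n : ℝ) * (triangleRemovalBound η * (n : ℝ) ^ 2) := by
          apply mul_le_mul_of_nonneg_left hS (by positivity)
      _ = triangleRemovalBound η * (n : ℝ) ^ 3 := by ring
      _ < triangleRemovalBound η * ((3 * n : ℕ) : ℝ) ^ 3 := by
          have hb := triangleRemovalBound_pos hη0
          have : ((n : ℝ)) ^ 3 < ((3 * n : ℕ) : ℝ) ^ 3 := by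
            push_cast
            have hn : (1 : ℝ) ≤ (n : ℝ) := by exact_mod_cast hn0
            nlinarith
          exact mul_lt_mul_of_pos_left this hb
      _ = triangleRemovalBound η * (Fintype.card (T ⊕ T ⊕ T)) ^ 3 := by rw [hV]
  obtain ⟨G', hG'le, hdec, hcard, hfree⟩ := G.triangle_removal hclique
  -- removed edges
  set D : Finset (Sym2 (T ⊕ T ⊕ T)) := G.edgeFinset \ G'.edgeFinset with hD_def
  have hDcard : ((D.card : ℝ)) < η * (9 * (n : ℝ) ^ 2) := by
    have hsub : G'.edgeFinset ⊆ G.edgeFinset := edgeFinset_mono hG'le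
    have : (D.card : ℕ) = G.edgeFinset.card - G'.edgeFinset.card := Finset.card_sdiff_of_subset hsub
    have hle : G'.edgeFinset.card ≤ G.edgeFinset.card := Finset.card_le_card hsub
    have : ((D.card : ℝ)) = (G.edgeFinset.card : ℝ) - G'.edgeFinset.card := by
      rw [this]; push_cast [hle]; ring
    rw [this]
    calc (G.edgeFinset.card : ℝ) - G'.edgeFinset.card
        < η * ((Fintype.card (T ⊕ T ⊕ T)) ^ 2 : ℕ) := hcard
      _ = η * (9 * (n : ℝ) ^ 2) := by rw [hV]; push_cast; ring
  -- removal relation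
  set rm : (T ⊕ T ⊕ T) → (T ⊕ T ⊕ T) → Prop :=
    fun u v => G.Adj u v ∧ ¬ G'.Adj u v with hrm_def
  -- counters
  set c01 : T → ℕ := fun a => (Finset.univ.filter fun x : T => rm (in₀ x) (in₁ (x * a))).card
    with hc01_def
  set c12 : T → ℕ := fun a => (Finset.univ.filter fun y : T => rm (in₁ y) (in₂ (y * a))).card
    with hc12_def
  set c02 : T → ℕ := fun a => (Finset.univ.filter fun x : T => rm (in₀ x) (in₂ (x * a))).card
    with hc02_def
  set Rf : Finset T := Finset.univ.filter
    (fun a => a ∈ S ∧ (n : ℝ) ≤ 3 * (c01 a + c12 a + c02 a)) with hRf_def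
  -- generic bound on sums of counters over Rf
  have edge_mem : ∀ u v : T ⊕ T ⊕ T, rm u v → s(u, v) ∈ D := by
    intro u v huv
    rw [hD_def, Finset.mem_sdiff, mem_edgeFinset, mem_edgeFinset, mem_edgeSet, mem_edgeSet]
    exact huv
  have key01 : ∑ a ∈ Rf, c01 a ≤ D.card := by
    rw [← Finset.card_sigma]
    apply Finset.card_le_card_of_injOn (fun p => s(in₀ p.2, in₁ (p.2 * p.1)))
    · rintro ⟨a, x⟩ hp
      rw [Finset.mem_coe, Finset.mem_sigma] at hp
      exact edge_mem _ _ (Finset.mem_filter.1 hp.2).2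
    · rintro ⟨a, x⟩ - ⟨a', x'⟩ - h
      simp only [Sym2.eq_iff] at h
      rcases h with ⟨h1, h2⟩ | ⟨h1, h2⟩
      · simp only [in₀, in₁, Sum.inl.injEq, Sum.inr.injEq] at h1 h2
        subst h1
        have : a = a' := mul_left_cancel h2
        subst this; rfl
      · exact absurd h1 (by simp [in₀, in₁])
  have key12 : ∑ a ∈ Rf, c12 a ≤ D.card := by
    rw [← Finset.card_sigma]
    apply Finset.card_le_card_of_injOn (fun p => s(in₁ p.2, in₂ (p.2 * p.1)))
    · rintro ⟨a, y⟩ hp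
      rw [Finset.mem_coe, Finset.mem_sigma] at hp
      exact edge_mem _ _ (Finset.mem_filter.1 hp.2).2
    · rintro ⟨a, y⟩ - ⟨a', y'⟩ - h
      simp only [Sym2.eq_iff] at h
      rcases h with ⟨h1, h2⟩ | ⟨h1, h2⟩
      · simp only [in₁, in₂, Sum.inl.injEq, Sum.inr.injEq] at h1 h2
        subst h1
        have : a = a' := mul_left_cancel h2
        subst this; rfl
      · exact absurd h1 (by simp [in₁, in₂])
  have key02 : ∑ a ∈ Rf, c02 a ≤ D.card := by
    rw [← Finset.card_sigma]
    apply Finset.card_le_card_of_injOn (fun p => s(in₀ p.2, in₂ (p.2 * p.1)))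
    · rintro ⟨a, x⟩ hp
      rw [Finset.mem_coe, Finset.mem_sigma] at hp
      exact edge_mem _ _ (Finset.mem_filter.1 hp.2).2
    · rintro ⟨a, x⟩ - ⟨a', x'⟩ - h
      simp only [Sym2.eq_iff] at h
      rcases h with ⟨h1, h2⟩ | ⟨h1, h2⟩
      · simp only [in₀, in₂, Sum.inl.injEq, Sum.inr.injEq] at h1 h2
        subst h1
        have : a = a' := mul_left_cancel h2
        subst this; rfl
      · exact absurd h1 (by simp [in₀, in₂])
  -- bound on Rf.card
  have hRf_bound : (Rf.card : ℝ) ≤ ε * n := by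
    have h1 : (Rf.card : ℝ) * n ≤ 3 * ((∑ a ∈ Rf, c01 a : ℕ) + (∑ a ∈ Rf, c12 a : ℕ)
        + (∑ a ∈ Rf, c02 a : ℕ)) := by
      have : (Rf.card : ℝ) * n = ∑ _a ∈ Rf, (n : ℝ) := by
        rw [Finset.sum_const, nsmul_eq_mul]
      rw [this]
      have h2 : ∀ a ∈ Rf, (n : ℝ) ≤ 3 * ((c01 a : ℝ) + c12 a + c02 a) := by
        intro a ha
        rw [hRf_def, Finset.mem_filter] at ha
        exact_mod_cast ha.2.2
      calc ∑ a ∈ Rf, (n : ℝ) ≤ ∑ a ∈ Rf, 3 * ((c01 a : ℝ) + c12 a + c02 a) :=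
            Finset.sum_le_sum h2
        _ = ∑ a ∈ Rf, (3 * (c01 a : ℝ) + 3 * (c12 a : ℝ) + 3 * (c02 a : ℝ)) := by
            apply Finset.sum_congr rfl; intros; ring
        _ = 3 * (∑ a ∈ Rf, (c01 a : ℝ)) + 3 * (∑ a ∈ Rf, (c12 a : ℝ))
            + 3 * (∑ a ∈ Rf, (c02 a : ℝ)) := by
            rw [Finset.sum_add_distrib, Finset.sum_add_distrib, ← Finset.mul_sum,
              ← Finset.mul_sum, ← Finset.mul_sum]
        _ = 3 * ((∑ a ∈ Rf, c01 a : ℕ) + (∑ a ∈ Rf, c12 a : ℕ) + (∑ a ∈ Rf, c02 a : ℕ)) := by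
            push_cast; ring
    have h3 : (Rf.card : ℝ) * n ≤ 9 * D.card := by
      have := key01; have := key12; have := key02
      calc (Rf.card : ℝ) * n ≤ 3 * ((∑ a ∈ Rf, c01 a : ℕ) + (∑ a ∈ Rf, c12 a : ℕ)
          + (∑ a ∈ Rf, c02 a : ℕ)) := h1
        _ ≤ 3 * ((D.card : ℝ) + D.card + D.card) := by
            gcongr <;> exact_mod_cast ‹_›
        _ = 9 * D.card := by ring
    have h4 : (Rf.card : ℝ) * n < 81 * η * (n : ℝ) ^ 2 := by
      calc (Rf.card : ℝ) * n ≤ 9 * D.card := h3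
        _ < 9 * (η * (9 * (n : ℝ) ^ 2)) := by linarith [hDcard, (by positivity : (0:ℝ) ≤ 9)]
        _ = 81 * η * (n : ℝ) ^ 2 := by ring
    have hnpos : (0 : ℝ) < n := by exact_mod_cast hn0
    have : (Rf.card : ℝ) < 81 * η * n := by
      have := h4
      nlinarith
    calc (Rf.card : ℝ) ≤ 81 * η * n := this.le
      _ ≤ ε * n := by nlinarith [hnpos.le]
  refine ⟨(Rf : Set T), ?_, ?_, ?_⟩
  · intro a ha
    rw [Finset.mem_coe, hRf_def, Finset.mem_filter] at ha
    exact ha.2.1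
  · rw [Set.ncard_coe_finset]; exact hRf_bound
  · rintro a ⟨haS, haR⟩ b ⟨hbS, hbR⟩ c ⟨hcS, hcR⟩ habc
    -- every x gives a removed edge
    have key : ∀ x : T, rm (in₀ x) (in₁ (x * a)) ∨ rm (in₁ (x * a)) (in₂ (x * a * b))
        ∨ rm (in₀ x) (in₂ (x * c)) := by
      intro x
      have htx : (x, x * a, x * c) ∈ t := by
        rw [ht_def, mem_triIdx]
        refine ⟨by simpa using haS, ?_, by simpa using hcS⟩
        show (x * a)⁻¹ * (x * c) ∈ S
        have hb' : (x * a)⁻¹ * (x * c) = b := by rw [← habc]; group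
        rw [hb']; exact hbS
      have hadj01 : G.Adj (in₀ x) (in₁ (x * a)) := Rel.in₀₁ htx
      have hadj02 : G.Adj (in₀ x) (in₂ (x * c)) := Rel.in₀₂ htx
      have hadj12 : G.Adj (in₁ (x * a)) (in₂ (x * c)) := Rel.in₁₂ htx
      have hxc : x * c = x * a * b := by rw [← habc]; group
      by_contra hcon
      push_neg at hcon
      obtain ⟨h1, h2, h3⟩ := hcon
      rw [hrm_def] at h1 h2 h3
      simp only [not_and, not_not] at h1 h2 h3
      have g1 := h1 hadj01
      have g3 := h3 hadj02
      have g2 := h2 (by rw [← hxc]; exact hadj12)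
      rw [← hxc] at g2
      exact hfree {in₀ x, in₁ (x * a), in₂ (x * c)}
        (is3Clique_triple_iff.2 ⟨g1, g3, g2⟩)
    -- count
    have hcover : (Finset.univ : Finset T) ⊆
        (Finset.univ.filter fun x : T => rm (in₀ x) (in₁ (x * a)))
        ∪ (Finset.univ.filter fun x : T => rm (in₁ (x * a)) (in₂ (x * a * b)))
        ∪ (Finset.univ.filter fun x : T => rm (in₀ x) (in₂ (x * c))) := by
      intro x _hx
      rcases key x with h | h | h
      · exact Finset.mem_union_left _ (Finset.mem_union_left _
          (Finset.mem_filter.2 ⟨Finset.mem_univ _, h⟩))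
      · exact Finset.mem_union_left _ (Finset.mem_union_right _
          (Finset.mem_filter.2 ⟨Finset.mem_univ _, h⟩))
      · exact Finset.mem_union_right _ (Finset.mem_filter.2 ⟨Finset.mem_univ _, h⟩)
    have hF2 : (Finset.univ.filter fun x : T => rm (in₁ (x * a)) (in₂ (x * a * b))).card
        ≤ c12 b := by
      simp only [hc12_def]
      apply Finset.card_le_card_of_injOn (fun x => x * a)
      · intro x hx
        rw [Finset.mem_coe, Finset.mem_filter] at hx ⊢
        exact ⟨Finset.mem_univ _, hx.2⟩
      · intro x _ x' _ h
        exact mul_right_cancel h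
    have hn_le : n ≤ c01 a + c12 b + c02 c := by
      calc n = (Finset.univ : Finset T).card := rfl
        _ ≤ _ := Finset.card_le_card hcover
        _ ≤ (Finset.univ.filter fun x : T => rm (in₀ x) (in₁ (x * a))).card
            + (Finset.univ.filter fun x : T => rm (in₁ (x * a)) (in₂ (x * a * b))).card
            + (Finset.univ.filter fun x : T => rm (in₀ x) (in₂ (x * c))).card := by
            refine le_trans (Finset.card_union_le _ _) ?_
            gcongr
            exact Finset.card_union_le _ _
        _ ≤ c01 a + c12 b + c02 c := by
            simp only [hc01_def, hc02_def]
            exact Nat.add_le_add (Nat.add_le_add le_rfl hF2) le_rfl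
    -- but each counter is small
    have small : ∀ d : T, d ∈ S → d ∉ (Rf : Set T) →
        3 * ((c01 d : ℝ) + c12 d + c02 d) < n := by
      intro d hdS hdR
      rw [Finset.mem_coe, hRf_def, Finset.mem_filter] at hdR
      push_neg at hdR
      have h := hdR (Finset.mem_univ d) hdS
      linarith
    have sa := small a haS haR
    have sb := small b hbS hbR
    have sc := small c hcS hcR
    have hfin : (n : ℝ) ≤ (c01 a : ℝ) + c12 b + c02 c := by exact_mod_cast hn_le
    have p1 : 3 * (c01 a : ℝ) < (n : ℝ) := by
      nlinarith [sa, (Nat.cast_nonneg (c12 a) : (0:ℝ) ≤ c12 a),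
        (Nat.cast_nonneg (c02 a) : (0:ℝ) ≤ c02 a)]
    have p2 : 3 * (c12 b : ℝ) < (n : ℝ) := by
      nlinarith [sb, (Nat.cast_nonneg (c01 b) : (0:ℝ) ≤ c01 b),
        (Nat.cast_nonneg (c02 b) : (0:ℝ) ≤ c02 b)]
    have p3 : 3 * (c02 c : ℝ) < (n : ℝ) := by
      nlinarith [sc, (Nat.cast_nonneg (c01 c) : (0:ℝ) ≤ c01 c),
        (Nat.cast_nonneg (c12 c) : (0:ℝ) ≤ c12 c)]
    linarith
end

section
/- Let t ≥ 2 be a natural number and A a finite abelian group. Let H be the subgroup of A^t consisting of all (a_1,…,a_t) with Σ_{j=1}^t a_j = 0 and Σ_{j=1}^t (j−1)·a_j = 0. For each i ∈ {1,…,t}, define ψ_i : A^{t−1} → A on the coordinates indexed by {1,…,t}∖{i} by ψ_i((a_j)_{j≠i}) = Σ_{j≠i} (j−i)·a_j. Then ψ_i is a surjective group homomorphism whose kernel is exactly the projection of H to the coordinates in {1,…,t}∖{i}. In particular, A^{t−1}/p_i(H) is isomorphic to A, where p_i(H) denotes this projection. -/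
/-- The subgroup `H` of `A^t` of tuples `(a_1,…,a_t)` with `Σ_j a_j = 0` and
`Σ_j (j-1)·a_j = 0` (indices `j ∈ Fin t` represent `j+1 ∈ {1,…,t}`, so the
coefficient `j-1` is the natural value of `j : Fin t`). -/
def Hsub (t : ℕ) (A : Type*) [AddCommGroup A] : AddSubgroup (Fin t → A) where
  carrier := {h | (∑ j : Fin t, h j = 0) ∧ (∑ j : Fin t, ((j : ℕ) : ℤ) • h j = 0)}
  zero_mem' := by simp
  add_mem' := by
    intro a b ha hb
    constructor
    · simp only [Pi.add_apply, Finset.sum_add_distrib, ha.1, hb.1, add_zero]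
    · simp only [Pi.add_apply, smul_add, Finset.sum_add_distrib, ha.2, hb.2, add_zero]
  neg_mem' := by
    intro a ha
    constructor
    · simp only [Pi.neg_apply, Finset.sum_neg_distrib, ha.1, neg_zero]
    · simp only [Pi.neg_apply, smul_neg, Finset.sum_neg_distrib, ha.2, neg_zero]

/-- The projection (restriction) homomorphism `A^t → A^({1,…,t}∖{i})`. -/
def resHom (t : ℕ) (A : Type*) [AddCommGroup A] (i : Fin t) :
    (Fin t → A) →+ ({j : Fin t // j ≠ i} → A) :=
  AddMonoidHom.mk' (fun h => fun j => h j.1) (fun _ _ => rfl)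


lemma split_sum {t : ℕ} {M : Type*} [AddCommMonoid M] (i : Fin t) (f : Fin t → M) :
    ∑ j, f j = f i + ∑ j : {j : Fin t // j ≠ i}, f j.1 := by
  rw [← Finset.sum_subtype (Finset.univ.erase i) (by simp) (fun j => f j),
    Finset.add_sum_erase _ _ (Finset.mem_univ i)]

/-- Let `t ≥ 2`, `A` a finite abelian group, and `ψ_i : A^{t-1} → A` defined on
the coordinates indexed by `{1,…,t} ∖ {i}` by `ψ_i((a_j)_{j≠i}) = Σ_{j≠i} (j-i)·a_j`.
Then `ψ_i` is a surjective group homomorphism whose kernel is exactly the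
projection `p_i(H)` of `H = Hsub t A` to the coordinates in `{1,…,t} ∖ {i}`;
in particular `A^{t-1} / p_i(H) ≃ A`. -/
theorem psi_surjective_kernel_projection (t : ℕ) (ht : 2 ≤ t)
    (A : Type) [AddCommGroup A] [Fintype A] (i : Fin t)
    (ψ : ({j : Fin t // j ≠ i} → A) → A)
    (hψ : ∀ a : {j : Fin t // j ≠ i} → A,
      ψ a = ∑ j : {j : Fin t // j ≠ i}, (((j.1 : ℕ) : ℤ) - ((i : ℕ) : ℤ)) • a j) :
    (∀ x y, ψ (x + y) = ψ x + ψ y) ∧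
    Function.Surjective ψ ∧
    (∀ a : {j : Fin t // j ≠ i} → A,
      ψ a = 0 ↔ a ∈ AddSubgroup.map (resHom t A i) (Hsub t A)) ∧
    Nonempty
      ((({j : Fin t // j ≠ i} → A) ⧸ AddSubgroup.map (resHom t A i) (Hsub t A)) ≃+ A) := by
  classical
  -- additivity
  have hadd : ∀ x y, ψ (x + y) = ψ x + ψ y := by
    intro x y
    simp only [hψ, Pi.add_apply, smul_add, Finset.sum_add_distrib]
  -- kernel
  have hker : ∀ a : {j : Fin t // j ≠ i} → A,
      ψ a = 0 ↔ a ∈ AddSubgroup.map (resHom t A i) (Hsub t A) := by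
    intro a
    constructor
    · intro h0
      set s : A := ∑ j : {j : Fin t // j ≠ i}, a j with hs
      set h : Fin t → A := fun k => if hk : k = i then -s else a ⟨k, hk⟩ with hh
      have hhi : h i = -s := dif_pos rfl
      have hhj : ∀ j : {j : Fin t // j ≠ i}, h j.1 = a j := fun j => dif_neg j.2
      refine ⟨h, ⟨?_, ?_⟩, ?_⟩
      · rw [split_sum i h, hhi]
        simp only [hhj]
        simp
        exact neg_add_cancel s
      · rw [split_sum i (fun k => ((k : ℕ) : ℤ) • h k)]
        simp only [hhi, hhj]
        have key : ∀ j : {j : Fin t // j ≠ i}, ((j.1 : ℕ) : ℤ) • a j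
            = (((j.1 : ℕ) : ℤ) - ((i : ℕ) : ℤ)) • a j + ((i : ℕ) : ℤ) • a j := by
          intro j; rw [← add_smul]; ring_nf
        rw [Finset.sum_congr rfl (fun j _ => key j), Finset.sum_add_distrib, ← hψ a, h0,
          zero_add, ← Finset.smul_sum, ← hs, smul_neg, neg_add_cancel]
      · funext j
        exact hhj j
    · rintro ⟨h, ⟨hs1, hs2⟩, rfl⟩
      have : ψ (resHom t A i h)
          = ∑ j : {j : Fin t // j ≠ i}, (((j.1 : ℕ) : ℤ) - ((i : ℕ) : ℤ)) • h j.1 := hψ _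
      rw [this]
      have := split_sum i (fun j => (((j : ℕ) : ℤ) - ((i : ℕ) : ℤ)) • h j)
      simp only [sub_self, zero_smul, zero_add] at this
      rw [← this]
      have : ∀ j : Fin t, (((j : ℕ) : ℤ) - ((i : ℕ) : ℤ)) • h j
          = ((j : ℕ) : ℤ) • h j - ((i : ℕ) : ℤ) • h j := fun j => sub_smul _ _ _
      rw [Finset.sum_congr rfl (fun j _ => this j), Finset.sum_sub_distrib, hs2,
        ← Finset.smul_sum, hs1, smul_zero, sub_zero]
  -- surjectivity
  have hsurj : Function.Surjective ψ := by
    obtain ⟨j0, hne, ε, hε⟩ : ∃ j0 : Fin t, j0 ≠ i ∧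
        ∃ ε : ℤ, (((j0 : ℕ) : ℤ) - ((i : ℕ) : ℤ)) * ε = 1 := by
      by_cases h : (i : ℕ) + 1 < t
      · refine ⟨⟨(i : ℕ) + 1, h⟩, Fin.ne_of_val_ne (by simp), 1, ?_⟩
        simp
      · have h1 : 1 ≤ (i : ℕ) := by have := i.isLt; omega
        refine ⟨⟨(i : ℕ) - 1, by omega⟩, Fin.ne_of_val_ne (by simp; omega), -1, ?_⟩
        simp only [Fin.val_mk]
        rw [Nat.cast_sub h1]
        push_cast
        ring
    intro c
    refine ⟨fun k => if k.1 = j0 then ε • c else 0, ?_⟩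
    rw [hψ]
    rw [Finset.sum_eq_single ⟨j0, hne⟩ (fun b _ hb => by
      rw [if_neg (fun hb' => hb (Subtype.ext hb')), smul_zero]) (fun hm => absurd (Finset.mem_univ _) hm)]
    rw [if_pos rfl, smul_smul, hε, one_smul]
  refine ⟨hadd, hsurj, hker, ?_⟩
  let ψ' : ({j : Fin t // j ≠ i} → A) →+ A := AddMonoidHom.mk' ψ hadd
  have hk : ψ'.ker = AddSubgroup.map (resHom t A i) (Hsub t A) := by
    ext a
    exact hker a
  exact ⟨hk ▸ QuotientAddGroup.quotientKerEquivOfSurjective ψ' hsurj⟩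
end

section
/- Let t ≥ 2 be a natural number, A a finite abelian group, and x_1,…,x_t ∈ A a t-term arithmetic progression (i.e., x_{i+1} − x_i is the same element of A for all 1 ≤ i ≤ t−1). Then the number of tuples (a_1,…,a_t) ∈ A^t satisfying Σ_{j=1}^t (j−i)·a_j = x_i for every i ∈ {1,…,t} is exactly |A|^{t−2}. -/
/-- Let `t ≥ 2`, `A` a finite abelian group, and `x_1, …, x_t ∈ A` a `t`-term
arithmetic progression. Then the number of tuples `(a_1,…,a_t) ∈ A^t` with
`Σ_j (j-i)·a_j = x_i` for every `i ∈ {1,…,t}` is exactly `|A|^(t-2)`. -/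
theorem count_solutions_of_AP (t : ℕ) (ht : 2 ≤ t)
    (A : Type) [AddCommGroup A] [Fintype A] (x : Fin t → A)
    (hx : ∃ d : A, ∀ i : Fin t, ∀ h : (i : ℕ) + 1 < t, x ⟨(i : ℕ) + 1, h⟩ - x i = d) :
    Nat.card {a : Fin t → A //
        ∀ i : Fin t, ∑ j : Fin t, (((j : ℕ) : ℤ) - ((i : ℕ) : ℤ)) • a j = x i}
      = Fintype.card A ^ (t - 2) := by
  obtain ⟨d, hd⟩ := hx
  have h0 : 0 < t := by omega
  have h1 : 1 < t := by omega
  -- the homomorphism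
  set φ : (Fin t → A) →+ A × A :=
    { toFun := fun a => (∑ j, a j, ∑ j : Fin t, ((j : ℕ) : ℤ) • a j)
      map_zero' := by simp
      map_add' := by
        intro a b
        simp [Finset.sum_add_distrib, smul_add, Prod.ext_iff] } with hφ
  -- split lemma
  have split : ∀ (a : Fin t → A) (i : Fin t),
      ∑ j : Fin t, (((j : ℕ) : ℤ) - ((i : ℕ) : ℤ)) • a j
        = (∑ j : Fin t, ((j : ℕ) : ℤ) • a j) - ((i : ℕ) : ℤ) • ∑ j, a j := by
    intro a i
    rw [Finset.smul_sum, ← Finset.sum_sub_distrib]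
    exact Finset.sum_congr rfl fun j _ => by rw [sub_smul]
  -- x formula
  have xfor : ∀ n (h : n < t), x ⟨n, h⟩ = x ⟨0, h0⟩ + (n : ℤ) • d := by
    intro n
    induction n with
    | zero => intro h; simp
    | succ n ih =>
      intro h
      have hn : n < t := by omega
      have := hd ⟨n, hn⟩ h
      have ihn := ih hn
      push_cast
      rw [add_smul, one_smul, ← add_assoc, ← ihn]
      simp only [Fin.val_mk] at this
      linear_combination (norm := abel) this
  -- the target point
  set c : A × A := (-d, x ⟨0, h0⟩) with hc
  -- condition iff φ a = c
  have key : ∀ a : Fin t → A,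
      (∀ i : Fin t, ∑ j : Fin t, (((j : ℕ) : ℤ) - ((i : ℕ) : ℤ)) • a j = x i) ↔ φ a = c := by
    intro a
    constructor
    · intro h
      have e0 := h ⟨0, h0⟩
      have e1 := h ⟨1, h1⟩
      rw [split] at e0 e1
      simp only [Fin.val_mk, Int.natCast_zero, Int.natCast_one, zero_smul, sub_zero, one_smul] at e0 e1
      have hd0 := hd ⟨0, h0⟩ h1
      simp only [Fin.val_mk] at hd0
      have hS : ∑ j, a j = -d := by
        have hx1 : x ⟨1, h1⟩ = x ⟨0, h0⟩ - ∑ j, a j := by rw [← e0, ← e1]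
        rw [hx1] at hd0
        have h' : -∑ j, a j = d := by rw [← hd0]; abel
        rw [← h', neg_neg]
      have : φ a = (∑ j, a j, ∑ j : Fin t, ((j : ℕ) : ℤ) • a j) := rfl
      rw [this, hS, e0, hc]
    · intro h
      intro i
      have hS : ∑ j, a j = -d := congrArg Prod.fst h
      have hT : ∑ j : Fin t, ((j : ℕ) : ℤ) • a j = x ⟨0, h0⟩ := congrArg Prod.snd h
      rw [split, hS, hT]
      have := xfor i.1 i.2
      rw [show (⟨(i : ℕ), i.2⟩ : Fin t) = i from rfl] at this
      rw [this]
      rw [smul_neg]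
      abel
  -- surjectivity
  have hsurj : Function.Surjective φ := by
    rintro ⟨s, u⟩
    refine ⟨Pi.single (M := fun _ => A) ⟨0, h0⟩ (s - u) + Pi.single (M := fun _ => A) ⟨1, h1⟩ u, ?_⟩
    have w0 : ∑ j : Fin t, ((j : ℕ) : ℤ) • Pi.single (M := fun _ => A) (⟨0, h0⟩ : Fin t) (s - u) j = 0 := by
      rw [Fintype.sum_eq_single (⟨0, h0⟩ : Fin t)]
      · simp
      · intro b hb; rw [Pi.single_eq_of_ne hb, smul_zero]
    have w1 : ∑ j : Fin t, ((j : ℕ) : ℤ) • Pi.single (M := fun _ => A) (⟨1, h1⟩ : Fin t) u j = u := by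
      rw [Fintype.sum_eq_single (⟨1, h1⟩ : Fin t)]
      · simp
      · intro b hb; rw [Pi.single_eq_of_ne hb, smul_zero]
    have : φ (Pi.single (M := fun _ => A) ⟨0, h0⟩ (s - u) + Pi.single (M := fun _ => A) ⟨1, h1⟩ u)
        = (∑ j : Fin t, (Pi.single (M := fun _ => A) (⟨0, h0⟩ : Fin t) (s - u) j
              + Pi.single (M := fun _ => A) (⟨1, h1⟩ : Fin t) u j),
           ∑ j : Fin t, ((j : ℕ) : ℤ) • (Pi.single (M := fun _ => A) (⟨0, h0⟩ : Fin t) (s - u) j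
              + Pi.single (M := fun _ => A) (⟨1, h1⟩ : Fin t) u j)) := rfl
    rw [this]
    simp only [smul_add, Finset.sum_add_distrib, w0, w1,
      Finset.sum_pi_single' (⟨0, h0⟩ : Fin t) (s - u) Finset.univ,
      Finset.sum_pi_single' (⟨1, h1⟩ : Fin t) u Finset.univ]
    simp
  -- a base solution
  obtain ⟨a₀, ha₀⟩ := hsurj c
  -- fiber ≃ kernel
  have e : {a : Fin t → A // ∀ i : Fin t,
      ∑ j : Fin t, (((j : ℕ) : ℤ) - ((i : ℕ) : ℤ)) • a j = x i} ≃ φ.ker :=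
    { toFun := fun a => ⟨a.1 - a₀, by
        rw [AddMonoidHom.mem_ker, map_sub, (key a.1).1 a.2, ha₀, sub_self]⟩
      invFun := fun b => ⟨b.1 + a₀, (key _).2 (by
        rw [map_add, show φ b.1 = 0 from b.2, ha₀, zero_add])⟩
      left_inv := fun a => by simp
      right_inv := fun b => by simp }
  rw [Nat.card_congr e]
  -- card of kernel
  have hquot : Nat.card ((Fin t → A) ⧸ φ.ker) = Fintype.card A ^ 2 := by
    rw [Nat.card_congr (QuotientAddGroup.quotientKerEquivOfSurjective φ hsurj).toEquiv]
    simp [Nat.card_eq_fintype_card, sq]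
  have htot : Nat.card (Fin t → A) = Fintype.card A ^ t := by
    simp [Nat.card_eq_fintype_card]
  have := AddSubgroup.card_eq_card_quotient_mul_card_addSubgroup φ.ker
  rw [htot, hquot] at this
  have hpos : 0 < Fintype.card A := Fintype.card_pos
  have hpow : Fintype.card A ^ t = Fintype.card A ^ 2 * Fintype.card A ^ (t - 2) := by
    rw [← pow_add]; congr 1; omega
  rw [hpow] at this
  exact (Nat.eq_of_mul_eq_mul_left (by positivity) this.symm)
end
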